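/- arXiv:0803.2901 — 2 statements merged into one kernel-verified Lean document; each statement's English description precedes it below -/
import Mathlib

section
/- Let k ∈ {1, 2, 3, 4} and let n ≥ 2k. If μ and λ are partitions of n that both have first part equal to n−k, and μ < λ in lexicographic order, then |η_μ| ≤ |η_λ|; moreover the inequality is strict whenever n ≥ 7. (Thus among the partitions of n with first part n−1, n−2, n−3 or n−4, the absolute values of the eigenvalues decrease in lexicographic order.) -/
/-- Derangement numbers: `D 0 = 1`, `D (m+1) = (m+1) * D m + (-1)^(m+1)`. -/
def derange : ℕ → ℤ
  | 0 => 1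
  | n + 1 => (n + 1 : ℤ) * derange n + (-1) ^ (n + 1)

/-- Subtract one from every part and discard the parts that become zero
(deleting the first column of the Ferrers diagram). -/
def strip (l : List ℕ) : List ℕ := (l.map (· - 1)).filter (fun x => 0 < x)

lemma strip_measure (l : List ℕ) : (strip l).sum + (strip l).length ≤ l.sum := by
  induction l with
  | nil => simp [strip]
  | cons x t ih =>
      simp only [strip, List.map_cons, List.filter_cons] at ih ⊢
      by_cases hx : 0 < x - 1 <;> simp [hx] <;> omega

/-- The eigenvalues of the derangement graph, defined by Renteln's recurrence:
`η ∅ = 1` and `η λ = (-1)^h (η (λ-ĥ) + (-1)^{λ₁} h η (λ-ĉ))`, where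
`h = λ₁ + r - 1` is the hook size, `λ-ĥ = strip (tail λ)` removes the hook,
and `λ-ĉ = strip λ` removes the first column. -/
def eta : List ℕ → ℤ
  | [] => 1
  | a :: t =>
      (-1) ^ (a + t.length) *
        (eta (strip t) + (-1) ^ a * ((a : ℤ) + t.length) * eta (strip (a :: t)))
  termination_by l => l.sum + l.length
  decreasing_by
  · have h1 := strip_measure t
    simp only [List.sum_cons, List.length_cons]
    omega
  · have h1 := strip_measure (a :: t)
    simp only [List.sum_cons, List.length_cons] at h1 ⊢
    omega

/-- `l` is (the list of parts of) a partition of `n`: weakly decreasing,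
all parts positive, summing to `n`. -/
def IsPartition (n : ℕ) (l : List ℕ) : Prop :=
  l.Pairwise (· ≥ ·) ∧ (∀ x ∈ l, 0 < x) ∧ l.sum = n

/-- The hook partition `(a, 1^(n-a))` of `n`. -/
def hookP (n a : ℕ) : List ℕ := a :: List.replicate (n - a) 1

lemma eta_nil' : eta [] = 1 := by rw [eta]

lemma derange_succ (a : ℕ) : derange (a+1) = (a+1 : ℤ) * derange a + (-1)^(a+1) := by
  rw [derange]

lemma eta_single (a : ℕ) : eta [a] = derange a := by
  induction a using Nat.twoStepInduction with
  | zero => rw [eta]; norm_num [strip, derange, eta_nil']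
  | one => rw [eta]; norm_num [strip, derange, eta_nil']
  | more a _ ih =>
      rw [eta, show strip [a+2] = [a+1] from by simp [strip], ih,
        show (a:ℕ)+2 = (a+1)+1 from rfl, derange_succ (a+1), derange_succ a]
      simp only [strip, List.length_nil, List.map_nil, List.filter_nil, eta_nil']
      push_cast
      simp only [pow_add]
      norm_num
      rcases neg_one_pow_eq_or ℤ a with h | h <;> rw [h] <;> ring

lemma eta_one1 (a : ℕ) : eta [a+1, 1] = (-1)^a - (a+2) * derange a := by
  cases a with
  | zero =>
      rw [eta, show strip [1] = [] from by decide, show strip [1,1] = [] from by decide, eta_nil']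
      norm_num [derange]
  | succ a =>
      rw [eta, show strip [1] = [] from by decide, eta_nil',
        show strip [a+1+1, 1] = [a+1] from by simp [strip], eta_single]
      simp only [List.length_cons, List.length_nil]
      push_cast
      simp only [pow_add]
      norm_num
      rcases neg_one_pow_eq_or ℤ a with h | h <;> rw [h] <;> ring

lemma eta_11 (a : ℕ) : eta [a+2,1,1] = (-1)^a + (a+4) * derange (a+1) := by
  rw [eta, show strip [1,1] = [] from by decide, eta_nil',
    show strip [a+2,1,1] = [a+1] from by simp [strip], eta_single]
  simp only [List.length_cons, List.length_nil]
  push_cast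
  simp only [pow_add]; norm_num
  rcases neg_one_pow_eq_or ℤ a with h | h <;> rw [h] <;> ring

lemma eta_2 (a : ℕ) : eta [a+2,2] = (a+3) * ((a+2) * derange a - (-1)^a) := by
  have h1 := eta_one1 a
  rw [eta, show strip [2] = [1] from by decide,
    show strip [a+2,2] = [a+1,1] from by simp [strip], eta_single, h1,
    show derange 1 = 0 from by norm_num [derange]]
  simp only [List.length_cons, List.length_nil]
  push_cast
  simp only [pow_add]; norm_num
  rcases neg_one_pow_eq_or ℤ a with h | h <;> rw [h] <;> ring

lemma eta_111 (a : ℕ) : eta [a+3,1,1,1] = (-1)^a - (a+6) * derange (a+2) := by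
  rw [eta, show strip [1,1,1] = [] from by decide, eta_nil',
    show strip [a+3,1,1,1] = [a+2] from by simp [strip], eta_single]
  simp only [List.length_cons, List.length_nil]
  push_cast
  simp only [pow_add]; norm_num
  rcases neg_one_pow_eq_or ℤ a with h | h <;> rw [h] <;> ring

lemma eta_21 (a : ℕ) : eta [a+3,2,1] = (a+5) * (-(-1)^a - (a+3) * derange (a+1)) := by
  have h1 := eta_one1 (a+1)
  norm_num at h1
  rw [eta, show strip [2,1] = [1] from by decide,
    show strip [a+3,2,1] = [a+2,1] from by simp [strip], eta_single, h1,
    show derange 1 = 0 from by norm_num [derange]]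
  simp only [List.length_cons, List.length_nil]
  push_cast
  simp only [pow_add]; norm_num
  rcases neg_one_pow_eq_or ℤ a with h | h <;> rw [h] <;> ring

lemma eta_3 (a : ℕ) : eta [a+3,3] = (-1)^a - (a+4)*(a+3)*((a+2) * derange a - (-1)^a) := by
  have h1 := eta_2 a
  rw [eta, show strip [3] = [2] from by decide,
    show strip [a+3,3] = [a+2,2] from by simp [strip], eta_single, h1,
    show derange 2 = 1 from by norm_num [derange]]
  simp only [List.length_cons, List.length_nil]
  push_cast
  simp only [pow_add]; norm_num
  rcases neg_one_pow_eq_or ℤ a with h | h <;> rw [h] <;> ring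

lemma eta_1111 (a : ℕ) : eta [a+4,1,1,1,1] = (-1)^a + (a+8) * derange (a+3) := by
  rw [eta, show strip [1,1,1,1] = [] from by decide, eta_nil',
    show strip [a+4,1,1,1,1] = [a+3] from by simp [strip], eta_single]
  simp only [List.length_cons, List.length_nil]
  push_cast
  simp only [pow_add]; norm_num
  rcases neg_one_pow_eq_or ℤ a with h | h <;> rw [h] <;> ring

lemma eta_211 (a : ℕ) : eta [a+4,2,1,1] = (a+7) * ((a+4) * derange (a+2) - (-1)^a) := by
  have h1 := eta_one1 (a+2)
  norm_num at h1
  rw [eta, show strip [2,1,1] = [1] from by decide,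
    show strip [a+4,2,1,1] = [a+3,1] from by simp [strip], eta_single, h1,
    show derange 1 = 0 from by norm_num [derange]]
  simp only [List.length_cons, List.length_nil]
  push_cast
  simp only [pow_add]; norm_num
  rcases neg_one_pow_eq_or ℤ a with h | h <;> rw [h] <;> ring

lemma eta_22 (a : ℕ) : eta [a+4,2,2] = -(-1)^a + (a+6) * ((a+5) * derange (a+2) - (-1)^a) := by
  have h1 := eta_11 (a+1)
  norm_num at h1
  have h2 := eta_one1 0
  norm_num [derange] at h2
  rw [eta, show strip [2,2] = [1,1] from by decide, h2,
    show strip [a+4,2,2] = [a+3,1,1] from by simp [strip], h1]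
  simp only [List.length_cons, List.length_nil]
  push_cast
  simp only [pow_add]; norm_num
  rcases neg_one_pow_eq_or ℤ a with h | h <;> rw [h] <;> ring

lemma eta_31 (a : ℕ) : eta [a+4,3,1] = (-1)^a + (a+6)*(a+4)*((a+3) * derange (a+1) + (-1)^a) := by
  have h1 := eta_2 (a+1)
  norm_num at h1
  rw [eta, show strip [3,1] = [2] from by decide,
    show strip [a+4,3,1] = [a+3,2] from by simp [strip], eta_single, h1,
    show derange 2 = 1 from by norm_num [derange]]
  simp only [List.length_cons, List.length_nil]
  push_cast
  simp only [pow_add]; norm_num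
  rcases neg_one_pow_eq_or ℤ a with h | h <;> rw [h] <;> ring

lemma eta_4 (a : ℕ) : eta [a+4,4] = -2*(-1)^a - (a+5)*((-1)^a - (a+4)*(a+3)*((a+2) * derange a - (-1)^a)) := by
  have h1 := eta_3 a
  rw [eta, show strip [4] = [3] from by decide,
    show strip [a+4,4] = [a+3,3] from by simp [strip], eta_single, h1,
    show derange 3 = 2 from by norm_num [derange]]
  simp only [List.length_cons, List.length_nil]
  push_cast
  simp only [pow_add]; norm_num
  rcases neg_one_pow_eq_or ℤ a with h | h <;> rw [h] <;> ring

lemma derange_two_le (b : ℕ) : 1 ≤ derange (b+2) := by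
  induction b with
  | zero => norm_num [derange]
  | succ c ih =>
      rw [show c+1+2 = (c+2)+1 from rfl, derange_succ (c+2)]
      rcases neg_one_pow_eq_or ℤ (c+2+1) with h | h <;> rw [h] <;> push_cast <;>
        nlinarith [ih, Nat.cast_nonneg (α := ℤ) c]

lemma derange_one_le (a : ℕ) (h : a ≠ 1) : 1 ≤ derange a := by
  match a, h with
  | 0, _ => norm_num [derange]
  | a+2, _ => exact derange_two_le a

lemma derange_nonneg (a : ℕ) : 0 ≤ derange a := by
  match a with
  | 1 => norm_num [derange]
  | 0 => norm_num [derange]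
  | a+2 => linarith [derange_two_le a]

lemma chain2 (a : ℕ) :
    0 ≤ eta [a+2,1,1] ∧ eta [a+2,1,1] ≤ eta [a+2,2] ∧
      (3 ≤ a → eta [a+2,1,1] < eta [a+2,2]) := by
  have hD0 : 0 ≤ derange a := derange_nonneg a
  have ha : (0:ℤ) ≤ (a:ℤ) := Nat.cast_nonneg a
  have k0 : (0:ℤ) ≤ ((a:ℤ)+4)*((a:ℤ)+1) * derange a :=
    mul_nonneg (by positivity) hD0
  rw [eta_11, eta_2, derange_succ a]
  rcases neg_one_pow_eq_or ℤ a with h | h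
  · have hev : Even a := by
      rwa [neg_one_pow_eq_one_iff_even (by norm_num : (-1:ℤ) ≠ 1)] at h
    have hD1 : 1 ≤ derange a := derange_one_le a (by rintro rfl; simp at hev)
    have k1 : (0:ℤ) ≤ ((a:ℤ)+4)*((a:ℤ)+1) * (derange a - 1) :=
      mul_nonneg (by positivity) (by linarith)
    simp only [pow_succ, h]
    push_cast
    refine ⟨by nlinarith, by nlinarith, fun _ => by nlinarith⟩
  · simp only [pow_succ, h]
    push_cast
    refine ⟨by nlinarith, by nlinarith, fun h3 => ?_⟩
    have hD1 : 1 ≤ derange a := derange_one_le a (by omega)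
    nlinarith

lemma chain3 (a : ℕ) :
    eta [a+3,1,1,1] ≤ 0 ∧ eta [a+3,2,1] ≤ eta [a+3,1,1,1] ∧
      eta [a+3,3] ≤ eta [a+3,2,1] ∧
      (1 ≤ a → eta [a+3,2,1] < eta [a+3,1,1,1] ∧ eta [a+3,3] < eta [a+3,2,1]) := by
  have hD0 : 0 ≤ derange a := derange_nonneg a
  have ha : (0:ℤ) ≤ (a:ℤ) := Nat.cast_nonneg a
  have ha2 : (0:ℤ) ≤ (a:ℤ)^2 := by positivity
  have ha3 : (0:ℤ) ≤ (a:ℤ)^3 := by positivity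
  have k0 : (0:ℤ) ≤ ((a:ℤ)+6)*((a:ℤ)+2)*((a:ℤ)+1) * derange a :=
    mul_nonneg (by positivity) hD0
  have hd2 : derange (a+2) = ((a:ℤ)+2) * derange (a+1) + (-1)^(a+2) := by
    rw [show (a:ℕ)+2 = (a+1)+1 from rfl, derange_succ (a+1)]; push_cast; ring
  rw [eta_111, eta_21, eta_3, hd2, derange_succ a]
  rcases neg_one_pow_eq_or ℤ a with h | h
  · have hev : Even a := by
      rwa [neg_one_pow_eq_one_iff_even (by norm_num : (-1:ℤ) ≠ 1)] at h
    have hD1 : 1 ≤ derange a := derange_one_le a (by rintro rfl; simp at hev)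
    have k1 : (0:ℤ) ≤ ((a:ℤ)+6)*((a:ℤ)+2)*((a:ℤ)+1) * (derange a - 1) :=
      mul_nonneg (by positivity) (by linarith)
    have k2 : (0:ℤ) ≤ ((a:ℤ)+1) * (derange a - 1) :=
      mul_nonneg (by positivity) (by linarith)
    have k3 : (0:ℤ) ≤ ((a:ℤ)+3) * (derange a - 1) :=
      mul_nonneg (by positivity) (by linarith)
    simp only [pow_succ, pow_add, h]
    push_cast
    refine ⟨by nlinarith, by nlinarith, by nlinarith, fun h1 => ?_⟩
    have ha1 : (1:ℤ) ≤ (a:ℤ) := by exact_mod_cast h1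
    exact ⟨by nlinarith, by nlinarith⟩
  · simp only [pow_succ, pow_add, h]
    push_cast
    have k2 : (0:ℤ) ≤ ((a:ℤ)+1) * derange a := mul_nonneg (by positivity) hD0
    have k3 : (0:ℤ) ≤ ((a:ℤ)+3) * derange a := mul_nonneg (by positivity) hD0
    refine ⟨by nlinarith, by nlinarith, by nlinarith, fun h1 => ?_⟩
    exact ⟨by nlinarith, by nlinarith⟩

lemma chain4 (a : ℕ) :
    0 ≤ eta [a+4,1,1,1,1] ∧ eta [a+4,1,1,1,1] < eta [a+4,2,1,1] ∧
      eta [a+4,2,1,1] < eta [a+4,2,2] ∧ eta [a+4,2,2] < eta [a+4,3,1] ∧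
      eta [a+4,3,1] < eta [a+4,4] := by
  have hD0 : 0 ≤ derange a := derange_nonneg a
  have ha : (0:ℤ) ≤ (a:ℤ) := Nat.cast_nonneg a
  have ha2 : (0:ℤ) ≤ (a:ℤ)^2 := by positivity
  have ha3 : (0:ℤ) ≤ (a:ℤ)^3 := by positivity
  have ha4 : (0:ℤ) ≤ (a:ℤ)^4 := by positivity
  have hd2 : derange (a+2) = ((a:ℤ)+2) * derange (a+1) + (-1)^(a+2) := by
    rw [show (a:ℕ)+2 = (a+1)+1 from rfl, derange_succ (a+1)]; push_cast; ring
  have hd3 : derange (a+3) = ((a:ℤ)+3) * derange (a+2) + (-1)^(a+3) := by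
    rw [show (a:ℕ)+3 = (a+2)+1 from rfl, derange_succ (a+2)]; push_cast; ring
  rw [eta_1111, eta_211, eta_22, eta_31, eta_4, hd3, hd2, derange_succ a]
  rcases neg_one_pow_eq_or ℤ a with h | h
  · have hev : Even a := by
      rwa [neg_one_pow_eq_one_iff_even (by norm_num : (-1:ℤ) ≠ 1)] at h
    have hD1 : 1 ≤ derange a := derange_one_le a (by rintro rfl; simp at hev)
    have k1 : (0:ℤ) ≤ ((a:ℤ)+8)*((a:ℤ)+3)*((a:ℤ)+2)*((a:ℤ)+1) * (derange a - 1) :=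
      mul_nonneg (by positivity) (by linarith)
    have k2 : (0:ℤ) ≤ ((a:ℤ)+2) * (derange a - 1) :=
      mul_nonneg (by positivity) (by linarith)
    have k3 : (0:ℤ) ≤ (((a:ℤ)+1)*((a:ℤ)+6)) * (derange a - 1) :=
      mul_nonneg (by positivity) (by linarith)
    have k4 : (0:ℤ) ≤ (((a:ℤ)+4)*((a:ℤ)+3)) * (derange a - 1) :=
      mul_nonneg (by positivity) (by linarith)
    simp only [pow_succ, pow_add, h]
    push_cast
    refine ⟨by nlinarith, by nlinarith, by nlinarith, by nlinarith, by nlinarith⟩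
  · have k1 : (0:ℤ) ≤ ((a:ℤ)+8)*((a:ℤ)+3)*((a:ℤ)+2)*((a:ℤ)+1) * derange a :=
      mul_nonneg (by positivity) hD0
    have k2 : (0:ℤ) ≤ ((a:ℤ)+2) * derange a := mul_nonneg (by positivity) hD0
    have k3 : (0:ℤ) ≤ (((a:ℤ)+1)*((a:ℤ)+6)) * derange a := mul_nonneg (by positivity) hD0
    have k4 : (0:ℤ) ≤ (((a:ℤ)+4)*((a:ℤ)+3)) * derange a := mul_nonneg (by positivity) hD0
    simp only [pow_succ, pow_add, h]
    push_cast
    refine ⟨by nlinarith, by nlinarith, by nlinarith, by nlinarith, by nlinarith⟩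

lemma tail_small (kk : ℕ) (hk : kk ≤ 4) (t : List ℕ) (hs : t.Pairwise (· ≥ ·))
    (hp : ∀ x ∈ t, 0 < x) (hsum : t.sum = kk) :
    t = [] ∨ t = [1] ∨ t = [2] ∨ t = [1,1] ∨ t = [3] ∨ t = [2,1] ∨ t = [1,1,1] ∨
      t = [4] ∨ t = [3,1] ∨ t = [2,2] ∨ t = [2,1,1] ∨ t = [1,1,1,1] := by
  match t with
  | [] => tauto
  | [x] =>
      simp only [List.mem_singleton, forall_eq] at hp
      simp only [List.sum_cons, List.sum_nil] at hsum
      simp only [List.cons.injEq, and_true, List.cons_ne_nil, reduceCtorEq, false_or, or_false,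
        and_false, List.nil_eq]
      omega
  | [x, y] =>
      simp only [List.pairwise_cons, List.mem_singleton, forall_eq, List.Pairwise.nil,
        List.mem_cons, List.not_mem_nil, or_false, and_true, ge_iff_le] at hs
      have h1 := hp x (by simp)
      have h2 := hp y (by simp)
      simp only [List.sum_cons, List.sum_nil] at hsum
      simp only [List.cons.injEq, and_true, List.cons_ne_nil, reduceCtorEq, false_or, or_false,
        and_false, List.nil_eq, false_and, and_true]
      omega
  | [x, y, z] =>
      simp only [List.pairwise_cons, List.mem_cons, List.not_mem_nil, or_false, forall_eq,
        List.Pairwise.nil, and_true, ge_iff_le, forall_eq_or_imp] at hs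
      have h1 := hp x (by simp)
      have h2 := hp y (by simp)
      have h3 := hp z (by simp)
      simp only [List.sum_cons, List.sum_nil] at hsum
      simp only [List.cons.injEq, and_true, List.cons_ne_nil, reduceCtorEq, false_or, or_false,
        and_false, List.nil_eq, false_and, and_true]
      omega
  | [x, y, z, w] =>
      simp only [List.pairwise_cons, List.mem_cons, List.not_mem_nil, or_false, forall_eq,
        List.Pairwise.nil, and_true, ge_iff_le, forall_eq_or_imp] at hs
      have h1 := hp x (by simp)
      have h2 := hp y (by simp)
      have h3 := hp z (by simp)
      have h4 := hp w (by simp)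
      simp only [List.sum_cons, List.sum_nil] at hsum
      simp only [List.cons.injEq, and_true, List.cons_ne_nil, reduceCtorEq, false_or, or_false,
        and_false, List.nil_eq, false_and, and_true]
      omega
  | x :: y :: z :: w :: v :: r =>
      exfalso
      have h1 := hp x (by simp)
      have h2 := hp y (by simp)
      have h3 := hp z (by simp)
      have h4 := hp w (by simp)
      have h5 := hp v (by simp)
      simp only [List.sum_cons] at hsum
      omega

/-- For `k ∈ {1,2,3,4}` and `n ≥ 2k`, among partitions of `n` with first part `n-k`,
the absolute values of the eigenvalues decrease in lexicographic order; strictly for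
`n ≥ 7`. -/
theorem eta_abs_monotone_lex (k n : ℕ) (hk1 : 1 ≤ k) (hk4 : k ≤ 4) (hn : 2 * k ≤ n)
    (m l : List ℕ) (hm : IsPartition n m) (hl : IsPartition n l)
    (hm1 : m.headI = n - k) (hl1 : l.headI = n - k)
    (hlex : List.Lex (· < ·) m l) :
    |eta m| ≤ |eta l| ∧ (7 ≤ n → |eta m| < |eta l|) := by
  obtain ⟨hsm, hpm, hsumm⟩ := hm
  obtain ⟨hsl, hpl, hsuml⟩ := hl
  cases m with
  | nil => exfalso; simp only [List.sum_nil] at hsumm; omega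
  | cons m0 tm =>
  cases l with
  | nil => exfalso; simp only [List.sum_nil] at hsuml; omega
  | cons l0 tl =>
  have hm0 : m0 = n - k := hm1
  have hl0 : l0 = n - k := hl1
  subst hm0 hl0
  simp only [List.sum_cons] at hsumm hsuml
  have hsummt : tm.sum = k := by omega
  have hsumlt : tl.sum = k := by omega
  have hst : tm.Pairwise (· ≥ ·) := hsm.of_cons
  have hsu : tl.Pairwise (· ≥ ·) := hsl.of_cons
  have hpt : ∀ x ∈ tm, 0 < x := fun x hx => hpm x (List.mem_cons_of_mem _ hx)
  have hpu : ∀ x ∈ tl, 0 < x := fun x hx => hpl x (List.mem_cons_of_mem _ hx)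
  have hlex' : List.Lex (· < ·) tm tl := by
    cases hlex with
    | cons h => exact h
    | rel h => exact absurd h (lt_irrefl _)
  obtain ⟨a, rfl⟩ : ∃ a, n = a + 2 * k := ⟨n - 2*k, by omega⟩
  have hcm := tail_small k hk4 tm hst hpt hsummt
  have hcl := tail_small k hk4 tl hsu hpu hsumlt
  clear hsm hsl hpm hpl hpt hpu hst hsu hlex hm1 hl1 hsumm hsuml
  interval_cases k
  · -- k = 1
    have htm : tm = [1] := by
      rcases hcm with rfl|rfl|rfl|rfl|rfl|rfl|rfl|rfl|rfl|rfl|rfl|rfl <;> simp_all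
    have htl : tl = [1] := by
      rcases hcl with rfl|rfl|rfl|rfl|rfl|rfl|rfl|rfl|rfl|rfl|rfl|rfl <;> simp_all
    subst htm htl
    exact absurd hlex' (by decide)
  · -- k = 2
    have hh : a + 2 * 2 - 2 = a + 2 := by omega
    rw [hh]
    have htm : tm = [2] ∨ tm = [1,1] := by
      rcases hcm with rfl|rfl|rfl|rfl|rfl|rfl|rfl|rfl|rfl|rfl|rfl|rfl <;> simp_all
    have htl : tl = [2] ∨ tl = [1,1] := by
      rcases hcl with rfl|rfl|rfl|rfl|rfl|rfl|rfl|rfl|rfl|rfl|rfl|rfl <;> simp_all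
    obtain ⟨h0, hle, hstrict⟩ := chain2 a
    have h0' : 0 ≤ eta [a+2,2] := le_trans h0 hle
    rcases htm with rfl | rfl <;> rcases htl with rfl | rfl
    · exact absurd hlex' (by decide)
    · exact absurd hlex' (by decide)
    · rw [abs_of_nonneg h0, abs_of_nonneg h0']
      exact ⟨hle, fun h7 => hstrict (by omega)⟩
    · exact absurd hlex' (by decide)
  · -- k = 3
    have hh : a + 2 * 3 - 3 = a + 3 := by omega
    rw [hh]
    have htm : tm = [3] ∨ tm = [2,1] ∨ tm = [1,1,1] := by
      rcases hcm with rfl|rfl|rfl|rfl|rfl|rfl|rfl|rfl|rfl|rfl|rfl|rfl <;> simp_all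
    have htl : tl = [3] ∨ tl = [2,1] ∨ tl = [1,1,1] := by
      rcases hcl with rfl|rfl|rfl|rfl|rfl|rfl|rfl|rfl|rfl|rfl|rfl|rfl <;> simp_all
    obtain ⟨hA0, hBA, hCB, hstrict⟩ := chain3 a
    have hB0 : eta [a+3,2,1] ≤ 0 := le_trans hBA hA0
    have hC0 : eta [a+3,3] ≤ 0 := le_trans hCB hB0
    rcases htm with rfl | rfl | rfl <;> rcases htl with rfl | rfl | rfl <;>
      try exact absurd hlex' (by decide)
    · rw [abs_of_nonpos hB0, abs_of_nonpos hC0]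
      exact ⟨by linarith, fun h7 => by have := (hstrict (by omega)).2; linarith⟩
    · rw [abs_of_nonpos hA0, abs_of_nonpos hC0]
      refine ⟨by linarith, fun h7 => ?_⟩
      obtain ⟨hs1, hs2⟩ := hstrict (by omega)
      linarith
    · rw [abs_of_nonpos hA0, abs_of_nonpos hB0]
      exact ⟨by linarith, fun h7 => by have := (hstrict (by omega)).1; linarith⟩
  · -- k = 4
    have hh : a + 2 * 4 - 4 = a + 4 := by omega
    rw [hh]
    have htm : tm = [4] ∨ tm = [3,1] ∨ tm = [2,2] ∨ tm = [2,1,1] ∨ tm = [1,1,1,1] := by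
      rcases hcm with rfl|rfl|rfl|rfl|rfl|rfl|rfl|rfl|rfl|rfl|rfl|rfl <;> simp_all
    have htl : tl = [4] ∨ tl = [3,1] ∨ tl = [2,2] ∨ tl = [2,1,1] ∨ tl = [1,1,1,1] := by
      rcases hcl with rfl|rfl|rfl|rfl|rfl|rfl|rfl|rfl|rfl|rfl|rfl|rfl <;> simp_all
    obtain ⟨hP0, hPQ, hQR, hRS, hST⟩ := chain4 a
    have hQ0 : 0 ≤ eta [a+4,2,1,1] := by linarith
    have hR0 : 0 ≤ eta [a+4,2,2] := by linarith
    have hS0 : 0 ≤ eta [a+4,3,1] := by linarith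
    have hT0 : 0 ≤ eta [a+4,4] := by linarith
    rcases htm with rfl | rfl | rfl | rfl | rfl <;> rcases htl with rfl | rfl | rfl | rfl | rfl <;>
      try exact absurd hlex' (by decide)
    · rw [abs_of_nonneg hS0, abs_of_nonneg hT0]
      exact ⟨by linarith, fun _ => by linarith⟩
    · rw [abs_of_nonneg hR0, abs_of_nonneg hT0]
      exact ⟨by linarith, fun _ => by linarith⟩
    · rw [abs_of_nonneg hR0, abs_of_nonneg hS0]
      exact ⟨by linarith, fun _ => by linarith⟩
    · rw [abs_of_nonneg hQ0, abs_of_nonneg hT0]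
      exact ⟨by linarith, fun _ => by linarith⟩
    · rw [abs_of_nonneg hQ0, abs_of_nonneg hS0]
      exact ⟨by linarith, fun _ => by linarith⟩
    · rw [abs_of_nonneg hQ0, abs_of_nonneg hR0]
      exact ⟨by linarith, fun _ => by linarith⟩
    · rw [abs_of_nonneg hP0, abs_of_nonneg hT0]
      exact ⟨by linarith, fun _ => by linarith⟩
    · rw [abs_of_nonneg hP0, abs_of_nonneg hS0]
      exact ⟨by linarith, fun _ => by linarith⟩
    · rw [abs_of_nonneg hP0, abs_of_nonneg hR0]
      exact ⟨by linarith, fun _ => by linarith⟩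
    · rw [abs_of_nonneg hP0, abs_of_nonneg hQ0]
      exact ⟨by linarith, fun _ => by linarith⟩
end

section
/- Let λ = (λ_1, …, λ_r) be a partition of n. For 1 ≤ i ≤ λ_1, let h_i denote the hook size of the partition obtained from λ by deleting its first i−1 columns; explicitly, h_i = (λ_1 − i + 1) + #{j : λ_j ≥ i} − 1. Then |η_λ| ≤ ∏_{i=1}^{λ_1} (h_i + 1). -/
lemma strip_cons_of_lt {a : ℕ} (t : List ℕ) (h : 1 < a) :
    strip (a :: t) = (a - 1) :: strip t := by
  simp only [strip, List.map_cons, List.filter_cons]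
  have : 0 < a - 1 := by omega
  simp [this]

lemma strip_cons_of_le {a : ℕ} (t : List ℕ) (h : a ≤ 1) :
    strip (a :: t) = strip t := by
  simp only [strip, List.map_cons, List.filter_cons]
  have : ¬ (0 < a - 1) := by omega
  simp [this]

lemma strip_eq_nil {l : List ℕ} (h : ∀ x ∈ l, x ≤ 1) : strip l = [] := by
  induction l with
  | nil => rfl
  | cons a t ih =>
      rw [strip_cons_of_le t (h a (by simp))]
      exact ih fun x hx => h x (by simp [hx])

lemma sorted_strip {l : List ℕ} (h : l.Pairwise (· ≥ ·)) : (strip l).Pairwise (· ≥ ·) := by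
  apply List.Pairwise.filter
  exact (List.pairwise_map).2 (h.imp fun {a b} hab => Nat.sub_le_sub_right hab 1)

lemma mem_strip_le {l : List ℕ} (h : l.Pairwise (· ≥ ·)) {y : ℕ} (hy : y ∈ strip l) :
    y ≤ l.headI - 1 := by
  cases l with
  | nil => simp [strip] at hy
  | cons a t =>
      simp only [strip, List.mem_filter, List.mem_map] at hy
      obtain ⟨⟨x, hx, rfl⟩, _⟩ := hy
      have hxa : x ≤ a := by
        rcases List.mem_cons.1 hx with rfl | hx'
        · exact le_refl x
        · exact (List.pairwise_cons.1 h).1 x hx'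
      simp only [List.headI]
      omega

lemma headI_strip {l : List ℕ} (hs : l.Pairwise (· ≥ ·)) (hp : ∀ x ∈ l, 0 < x) :
    (strip l).headI = l.headI - 1 := by
  cases l with
  | nil => rfl
  | cons a t =>
      by_cases ha : 1 < a
      · rw [strip_cons_of_lt t ha]; rfl
      · rw [strip_cons_of_le t (by omega)]
        have ht : ∀ x ∈ t, x ≤ 1 := fun x hx =>
          le_trans ((List.pairwise_cons.1 hs).1 x hx) (by omega)
        rw [strip_eq_nil ht]
        have := hp a (by simp)
        show (0 : ℕ) = a - 1
        omega

lemma countP_strip (l : List ℕ) (i : ℕ) (hi : 1 ≤ i) :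
    (strip l).countP (fun x => i ≤ x) = l.countP (fun x => i + 1 ≤ x) := by
  induction l with
  | nil => rfl
  | cons a t ih =>
      by_cases ha : 1 < a
      · rw [strip_cons_of_lt t ha, List.countP_cons, List.countP_cons, ih]
        congr 1
        by_cases h : i + 1 ≤ a
        · have : i ≤ a - 1 := by omega
          simp [h, this]
        · have : ¬ i ≤ a - 1 := by omega
          simp [h, this]
      · rw [strip_cons_of_le t (by omega), List.countP_cons, ih]
        have : ¬ i + 1 ≤ a := by omega
        simp [this]

def Pf (l : List ℕ) : ℕ :=
  ∏ i ∈ Finset.Icc 1 l.headI, ((l.headI - i + 1) + l.countP (fun x => i ≤ x) - 1 + 1)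

lemma Pf_mono (s : List ℕ) (c : ℕ) (hc : s.headI ≤ c) : Pf s ≤ Pf (c :: s) := by
  unfold Pf
  simp only [List.headI]
  calc ∏ i ∈ Finset.Icc 1 s.headI, ((s.headI - i + 1) + s.countP (fun x => i ≤ x) - 1 + 1)
      ≤ ∏ i ∈ Finset.Icc 1 s.headI,
          ((c - i + 1) + (c :: s).countP (fun x => i ≤ x) - 1 + 1) := by
        apply Finset.prod_le_prod'
        intro i hi
        simp only [Finset.mem_Icc] at hi
        rw [List.countP_cons]
        have hic : i ≤ c := le_trans hi.2 hc
        simp only [hic, decide_true, if_pos]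
        omega
    _ ≤ ∏ i ∈ Finset.Icc 1 c, ((c - i + 1) + (c :: s).countP (fun x => i ≤ x) - 1 + 1) := by
        apply Finset.prod_le_prod_of_subset_of_one_le'
        · exact Finset.Icc_subset_Icc_right hc
        · intro i _ _
          omega

lemma Pf_cons (a : ℕ) (t : List ℕ) (ha : 1 ≤ a) (hs : (a :: t).Pairwise (· ≥ ·))
    (hp : ∀ x ∈ a :: t, 0 < x) :
    Pf (a :: t) = (a + t.length + 1) * Pf (strip (a :: t)) := by
  have hst : (strip (a :: t)).headI = a - 1 := by
    have := headI_strip hs hp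
    simpa using this
  have hsplit : Finset.Icc 1 a = insert 1 (Finset.Icc 2 a) := by
    ext i; simp only [Finset.mem_Icc, Finset.mem_insert]; omega
  have h1 : (1 : ℕ) ∉ Finset.Icc 2 a := by simp
  have hcount : (a :: t).countP (fun x => 1 ≤ x) = t.length + 1 := by
    rw [List.countP_eq_length.mpr]
    · simp
    · intro x hx; have := hp x hx; simp; omega
  unfold Pf
  rw [hst]
  simp only [List.headI_cons, hsplit, Finset.prod_insert h1, hcount]
  congr 1
  · omega
  · have hmap : (Finset.Icc 1 (a - 1)).map (addRightEmbedding 1) = Finset.Icc 2 a := by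
      rw [Finset.map_add_right_Icc]
      congr 1
      omega
    rw [← hmap, Finset.prod_map]
    apply Finset.prod_congr rfl
    intro i hi
    simp only [Finset.mem_Icc] at hi
    rw [countP_strip (a :: t) i hi.1]
    simp only [addRightEmbedding_apply]
    congr 2
    omega

lemma eta_abs_le_Pf : ∀ N l, l.sum + l.length ≤ N → l.Pairwise (· ≥ ·) →
    (∀ x ∈ l, 0 < x) → |eta l| ≤ (Pf l : ℤ) := by
  intro N
  induction N with
  | zero =>
      intro l hN _ _
      have : l = [] := by
        cases l with
        | nil => rfl
        | cons a t => simp at hN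
      subst this
      simp [eta, Pf]
  | succ N ih =>
      intro l hN hs hp
      cases l with
      | nil => simp [eta, Pf]
      | cons a t =>
          have ha : 0 < a := hp a (by simp)
          have hts : t.Pairwise (· ≥ ·) := (List.pairwise_cons.1 hs).2
          have htp : ∀ x ∈ t, 0 < x := fun x hx => hp x (by simp [hx])
          have hstp : ∀ x ∈ strip t, 0 < x := by
            intro x hx
            simp only [strip, List.mem_filter, decide_eq_true_eq] at hx
            exact hx.2
          have hslp : ∀ x ∈ strip (a :: t), 0 < x := by
            intro x hx
            simp only [strip, List.mem_filter, decide_eq_true_eq] at hx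
            exact hx.2
          have hmN : (a :: t).sum + (a :: t).length ≤ N + 1 := hN
          simp only [List.sum_cons, List.length_cons] at hmN
          have hm1 : (strip t).sum + (strip t).length ≤ N := by
            have := strip_measure t; omega
          have hm2 : (strip (a :: t)).sum + (strip (a :: t)).length ≤ N := by
            have := strip_measure (a :: t)
            simp only [List.sum_cons, List.length_cons] at this
            omega
          have IH1 := ih (strip t) hm1 (sorted_strip hts) hstp
          have IH2 := ih (strip (a :: t)) hm2 (sorted_strip hs) hslp
          have hcomp : Pf (strip t) ≤ Pf (strip (a :: t)) := by
            by_cases h1a : 1 < a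
            · rw [strip_cons_of_lt t h1a]
              apply Pf_mono
              cases ht : strip t with
              | nil => simp
              | cons b u =>
                  have hb : b ∈ strip t := by rw [ht]; simp
                  have := mem_strip_le hts hb
                  have hta : t.headI ≤ a := by
                    cases t with
                    | nil => simp
                    | cons c u' => exact (List.pairwise_cons.1 hs).1 c (by simp)
                  simp only [List.headI]
                  omega
            · rw [strip_cons_of_le t (by omega)]
          have key : |eta (a :: t)| ≤
              (Pf (strip t) : ℤ) + ((a : ℤ) + t.length) * Pf (strip (a :: t)) := by
            rw [eta]
            have hsgn : |(-1 : ℤ) ^ (a + t.length)| = 1 := by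
              rw [abs_pow, abs_neg, abs_one, one_pow]
            rw [abs_mul, hsgn, one_mul]
            refine le_trans (abs_add_le _ _) (add_le_add IH1 ?_)
            rw [abs_mul, abs_mul, abs_pow, abs_neg, abs_one, one_pow, one_mul]
            rw [abs_of_nonneg (by positivity : (0 : ℤ) ≤ (a : ℤ) + t.length)]
            exact mul_le_mul_of_nonneg_left IH2 (by positivity)
          refine le_trans key ?_
          have hfin : (Pf (strip t) : ℤ) + ((a : ℤ) + t.length) * Pf (strip (a :: t)) ≤
              ((a + t.length + 1 : ℕ) * Pf (strip (a :: t)) : ℤ) := by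
            push_cast
            nlinarith [hcomp, (Nat.cast_le (α := ℤ)).2 hcomp]
          refine le_trans hfin ?_
          rw [← Nat.cast_mul, ← Pf_cons a t ha hs hp]


/-- Hook-product bound: with `h_i = (λ₁ - i + 1) + #{j : λ_j ≥ i} - 1` the hook size of
the partition obtained by deleting the first `i-1` columns,
`|η_λ| ≤ ∏_{i=1}^{λ₁} (h_i + 1)`. -/
theorem eta_abs_le_hook_product (n : ℕ) (l : List ℕ) (hl : IsPartition n l) :
    |eta l| ≤ ∏ i ∈ Finset.Icc 1 l.headI,
      (((l.headI - i + 1) + l.countP (fun x => i ≤ x) - 1 + 1 : ℕ) : ℤ) := by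
  obtain ⟨hs, hp, -⟩ := hl
  have h := eta_abs_le_Pf (l.sum + l.length) l le_rfl hs hp
  unfold Pf at h
  rw [Nat.cast_prod] at h
  exact h
end
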